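/- arXiv:1310.3061 — 2 statements merged into one kernel-verified Lean document; each statement's English description precedes it below -/
import Mathlib

section
/- Let 0 < Y < 1 and let G, M, a be real numbers with −G < a < M. Then, with all complex powers taken in the principal branch, (M − (a+iy))^Y + (G + (a+iy))^Y = 2·cos(πY/2)·y^Y + O(y^{Y−1}) as y → +∞; that is, there exist C > 0 and y₀ > 0 such that |(M − (a+iy))^Y + (G + (a+iy))^Y − 2 cos(πY/2) y^Y| ≤ C y^{Y−1} for all y ≥ y₀. -/
open Complex Set

/-- Segment estimate: moving the base of a principal-branch power by a real
amount `b` along a horizontal segment at height `±y` changes it by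
`O(y^(Y-1))`. -/
lemma cgmy_seg_bound (Y : ℝ) (hY0 : 0 < Y) (hY1 : Y < 1) (s : ℂ)
    (hs : s = Complex.I ∨ s = -Complex.I) (b y : ℝ) (hb : 0 ≤ b) (hy : 1 ≤ y) :
    ‖((b : ℂ) + (y : ℂ) * s) ^ (Y : ℂ) - ((y : ℂ) * s) ^ (Y : ℂ)‖
      ≤ Y * b * y ^ (Y - 1) := by
  have hy0 : (0 : ℝ) < y := lt_of_lt_of_le one_pos hy
  have hsim : s.im = 1 ∨ s.im = -1 := by
    rcases hs with h | h <;> simp [h]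
  have hsre : s.re = 0 := by rcases hs with h | h <;> simp [h]
  -- the function along the segment
  set f : ℝ → ℂ := fun t => ((t : ℂ) + (y : ℂ) * s) ^ (Y : ℂ) with hf
  set f' : ℝ → ℂ := fun t => (Y : ℂ) * ((t : ℂ) + (y : ℂ) * s) ^ ((Y : ℂ) - 1) with hf'
  have him : ∀ t : ℝ, ((t : ℂ) + (y : ℂ) * s).im ≠ 0 := by
    intro t
    have : ((t : ℂ) + (y : ℂ) * s).im = y * s.im := by simp
    rw [this]
    rcases hsim with h | h <;> simp [h] <;> positivity
  have hmem : ∀ t : ℝ, ((t : ℂ) + (y : ℂ) * s) ∈ Complex.slitPlane := by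
    intro t
    rw [Complex.mem_slitPlane_iff]
    exact Or.inr (him t)
  have hderiv : ∀ t : ℝ, HasDerivAt f (f' t) t := by
    intro t
    have h1 : HasDerivAt (fun z : ℂ => (z + (y : ℂ) * s) ^ (Y : ℂ))
        ((Y : ℂ) * (((t : ℂ) + (y : ℂ) * s)) ^ ((Y : ℂ) - 1) * 1) (t : ℂ) := by
      exact ((hasDerivAt_id ((t : ℂ))).add_const _).cpow_const (hmem t)
    have h2 := h1.comp_ofReal
    simpa [f, f', mul_one] using h2
  have habs : ∀ t : ℝ, y ≤ ‖(t : ℂ) + (y : ℂ) * s‖ := by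
    intro t
    have h1 : y = |((t : ℂ) + (y : ℂ) * s).im| := by
      have : ((t : ℂ) + (y : ℂ) * s).im = y * s.im := by simp
      rw [this]
      rcases hsim with h | h <;> simp [h, abs_of_pos hy0]
    have h2 := Complex.abs_im_le_norm ((t : ℂ) + (y : ℂ) * s)
    linarith
  have hbound : ∀ t : ℝ, ‖f' t‖ ≤ Y * y ^ (Y - 1) := by
    intro t
    have hz : ((t : ℂ) + (y : ℂ) * s) ≠ 0 := by
      intro h
      exact him t (by rw [h]; rfl)
    have h1 : ‖f' t‖
        = Y * ‖(t : ℂ) + (y : ℂ) * s‖ ^ (Y - 1) := by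
      have : ((Y : ℂ) - 1) = ((Y - 1 : ℝ) : ℂ) := by push_cast; ring
      rw [hf', norm_mul, this, Complex.norm_cpow_of_ne_zero hz]
      simp [abs_of_pos hY0]
    rw [h1]
    have h2 : ‖(t : ℂ) + (y : ℂ) * s‖ ^ (Y - 1) ≤ y ^ (Y - 1) :=
      Real.rpow_le_rpow_of_nonpos hy0 (habs t) (by linarith)
    have := mul_le_mul_of_nonneg_left h2 (le_of_lt hY0)
    linarith
  have key := norm_image_sub_le_of_norm_deriv_le_segment'
    (f := f) (f' := f') (a := 0) (b := b) (C := Y * y ^ (Y - 1))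
    (fun t _ => (hderiv t).hasDerivWithinAt)
    (fun t _ => hbound t) b (by constructor <;> simp [hb])
  have h0 : f 0 = ((y : ℂ) * s) ^ (Y : ℂ) := by simp [f]
  have hb' : f b - f 0 = ((b : ℂ) + (y : ℂ) * s) ^ (Y : ℂ) - ((y : ℂ) * s) ^ (Y : ℂ) := by
    rw [h0]
  rw [hb'] at key
  calc ‖((b : ℂ) + (y : ℂ) * s) ^ (Y : ℂ) - ((y : ℂ) * s) ^ (Y : ℂ)‖
      ≤ Y * y ^ (Y - 1) * (b - 0) := key
    _ = Y * b * y ^ (Y - 1) := by ring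

/-- The sum of the two leading powers. -/
lemma cgmy_leading (Y y : ℝ) (hy : 0 < y) :
    ((y : ℂ) * Complex.I) ^ (Y : ℂ) + ((y : ℂ) * (-Complex.I)) ^ (Y : ℂ)
      = 2 * (Real.cos (Real.pi * Y / 2) : ℂ) * (y : ℂ) ^ (Y : ℂ) := by
  have hy0 : (y : ℂ) ≠ 0 := by exact_mod_cast ne_of_gt hy
  have h1 : ((y : ℂ) * Complex.I) ≠ 0 := mul_ne_zero hy0 Complex.I_ne_zero
  have h2 : ((y : ℂ) * (-Complex.I)) ≠ 0 := mul_ne_zero hy0 (by simp [Complex.I_ne_zero])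
  rw [Complex.cpow_def_of_ne_zero h1, Complex.cpow_def_of_ne_zero h2,
    Complex.cpow_def_of_ne_zero hy0,
    Complex.log_ofReal_mul hy Complex.I_ne_zero,
    Complex.log_ofReal_mul hy (by simp [Complex.I_ne_zero]),
    Complex.log_I, Complex.log_neg_I, ← Complex.ofReal_log (le_of_lt hy)]
  have hcos : 2 * ((Real.cos (Real.pi * Y / 2) : ℝ) : ℂ)
      = Complex.exp (((Real.pi * Y / 2 : ℝ) : ℂ) * Complex.I)
      + Complex.exp (-((Real.pi * Y / 2 : ℝ) : ℂ) * Complex.I) := by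
    rw [Complex.ofReal_cos, Complex.two_cos]
  have e1 : ((Real.log y : ℂ) + (Real.pi : ℂ) / 2 * Complex.I) * (Y : ℂ)
      = (Real.log y : ℂ) * Y + ((Real.pi * Y / 2 : ℝ) : ℂ) * Complex.I := by
    push_cast; ring
  have e2 : ((Real.log y : ℂ) + -((Real.pi : ℂ) / 2) * Complex.I) * (Y : ℂ)
      = (Real.log y : ℂ) * Y + (-((Real.pi * Y / 2 : ℝ) : ℂ)) * Complex.I := by
    push_cast; ring
  rw [e1, e2, Complex.exp_add, Complex.exp_add]
  rw [hcos]
  ring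

/-- CGMY characteristic exponent asymptotics along a vertical line:
for `0 < Y < 1` and `−G < a < M`, with principal-branch complex powers,
`(M−(a+iy))^Y + (G+(a+iy))^Y = 2 cos(πY/2) y^Y + O(y^{Y−1})` as `y → +∞`. -/
theorem cgmy_exponent_asymptotics
    (Y G M a : ℝ) (hY0 : 0 < Y) (hY1 : Y < 1) (haG : -G < a) (haM : a < M) :
    ∃ C : ℝ, 0 < C ∧ ∃ y₀ : ℝ, 0 < y₀ ∧ ∀ y : ℝ, y₀ ≤ y →
      ‖((M : ℂ) - ((a : ℂ) + y * Complex.I)) ^ (Y : ℂ)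
          + ((G : ℂ) + ((a : ℂ) + y * Complex.I)) ^ (Y : ℂ)
          - 2 * (Real.cos (Real.pi * Y / 2) : ℂ) * (y : ℂ) ^ (Y : ℂ)‖
        ≤ C * y ^ (Y - 1) := by
  set b : ℝ := M - a with hbdef
  set c : ℝ := G + a with hcdef
  have hb : 0 < b := by simp [hbdef]; linarith
  have hc : 0 < c := by simp [hcdef]; linarith
  refine ⟨Y * (b + c) + 1, by positivity, 1, one_pos, fun y hy => ?_⟩
  have hy0 : (0 : ℝ) < y := lt_of_lt_of_le one_pos hy
  have key1 := cgmy_seg_bound Y hY0 hY1 (-Complex.I) (Or.inr rfl) b y (le_of_lt hb) hy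
  have key2 := cgmy_seg_bound Y hY0 hY1 Complex.I (Or.inl rfl) c y (le_of_lt hc) hy
  have hlead := cgmy_leading Y y hy0
  have e1 : ((M : ℂ) - ((a : ℂ) + y * Complex.I)) = ((b : ℂ) + (y : ℂ) * (-Complex.I)) := by
    push_cast [hbdef]; ring
  have e2 : ((G : ℂ) + ((a : ℂ) + y * Complex.I)) = ((c : ℂ) + (y : ℂ) * Complex.I) := by
    push_cast [hcdef]; ring
  rw [e1, e2, ← hlead]
  have step : ‖((b : ℂ) + (y : ℂ) * (-Complex.I)) ^ (Y : ℂ)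
      + ((c : ℂ) + (y : ℂ) * Complex.I) ^ (Y : ℂ)
      - (((y : ℂ) * Complex.I) ^ (Y : ℂ) + ((y : ℂ) * (-Complex.I)) ^ (Y : ℂ))‖
      ≤ Y * b * y ^ (Y - 1) + Y * c * y ^ (Y - 1) := by
    have hre : ((b : ℂ) + (y : ℂ) * (-Complex.I)) ^ (Y : ℂ)
        + ((c : ℂ) + (y : ℂ) * Complex.I) ^ (Y : ℂ)
        - (((y : ℂ) * Complex.I) ^ (Y : ℂ) + ((y : ℂ) * (-Complex.I)) ^ (Y : ℂ))
        = (((b : ℂ) + (y : ℂ) * (-Complex.I)) ^ (Y : ℂ) - ((y : ℂ) * (-Complex.I)) ^ (Y : ℂ))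
        + (((c : ℂ) + (y : ℂ) * Complex.I) ^ (Y : ℂ) - ((y : ℂ) * Complex.I) ^ (Y : ℂ)) := by
      ring
    rw [hre]
    exact le_trans (norm_add_le _ _) (add_le_add key1 key2)
  refine le_trans step ?_
  have hpow : 0 ≤ y ^ (Y - 1) := Real.rpow_nonneg (le_of_lt hy0) _
  nlinarith [hpow]
end

section
/- Let C > 0, 0 < Y < 1, G > 0, M > 1, and define b = −C·Γ(−Y)·((M−1)^Y − M^Y + (G+1)^Y − G^Y), where Γ is the real Gamma function. Then b < 0 if and only if M − 1 < G. -/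
/-- Strict concavity consequence: for `0 < Y < 1` and `0 ≤ a < b`,
`a^Y + (b+1)^Y < (a+1)^Y + b^Y`. -/
lemma cgmy_rpow_aux {Y : ℝ} (hY0 : 0 < Y) (hY1 : Y < 1) {a b : ℝ}
    (ha : 0 ≤ a) (hab : a < b) :
    a ^ Y + (b + 1) ^ Y < (a + 1) ^ Y + b ^ Y := by
  have hsc := Real.strictConcaveOn_rpow hY0 hY1
  have hd : 0 < b + 1 - a := by linarith
  have hαpos : 0 < (b - a) / (b + 1 - a) := div_pos (by linarith) hd
  have hβpos : 0 < 1 / (b + 1 - a) := div_pos one_pos hd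
  have hsum : (b - a) / (b + 1 - a) + 1 / (b + 1 - a) = 1 := by field_simp; ring
  have hne : a ≠ b + 1 := by linarith
  have hb1 : (0:ℝ) ≤ b + 1 := by linarith
  have e1 : (b - a) / (b + 1 - a) * a + 1 / (b + 1 - a) * (b + 1) = a + 1 := by
    field_simp; ring
  have e2 : 1 / (b + 1 - a) * a + (b - a) / (b + 1 - a) * (b + 1) = b := by
    field_simp; ring
  have h1 := hsc.2 (Set.mem_Ici.2 ha) (Set.mem_Ici.2 hb1) hne hαpos hβpos hsum
  have h2 := hsc.2 (Set.mem_Ici.2 ha) (Set.mem_Ici.2 hb1) hne hβpos hαpos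
    (by linarith)
  simp only [smul_eq_mul] at h1 h2
  rw [e1] at h1
  rw [e2] at h2
  have hβ1 : 1 / (b + 1 - a) = 1 - (b - a) / (b + 1 - a) := by linarith
  rw [hβ1] at h1 h2
  nlinarith [h1, h2]

/-- sign of the CGMY martingale drift.
For `C > 0`, `0 < Y < 1`, `G > 0`, `M > 1`, the drift
`b = −C Γ(−Y)((M−1)^Y − M^Y + (G+1)^Y − G^Y)` is negative iff `M − 1 < G`. -/
theorem cgmy_drift_sign
    (C Y G M : ℝ) (hC : 0 < C) (hY0 : 0 < Y) (hY1 : Y < 1) (hG : 0 < G) (hM : 1 < M)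
    (b : ℝ)
    (hb : b = -C * Real.Gamma (-Y) * ((M - 1) ^ Y - M ^ Y + (G + 1) ^ Y - G ^ Y)) :
    b < 0 ↔ M - 1 < G := by
  have hrec : Real.Gamma (-Y + 1) = -Y * Real.Gamma (-Y) :=
    Real.Gamma_add_one (by linarith)
  have hpos : 0 < Real.Gamma (-Y + 1) := Real.Gamma_pos_of_pos (by linarith)
  have hGam : Real.Gamma (-Y) < 0 := by nlinarith
  have hK : 0 < -C * Real.Gamma (-Y) := by nlinarith
  constructor
  · intro hneg
    by_contra hcon
    push_neg at hcon
    rcases lt_or_eq_of_le hcon with hlt | heq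
    · have h := cgmy_rpow_aux hY0 hY1 hG.le hlt
      rw [show M - 1 + 1 = M by ring] at h
      nlinarith
    · subst heq
      rw [show M - 1 + 1 = M by ring] at hb
      nlinarith
  · intro hlt
    have h := cgmy_rpow_aux hY0 hY1 (by linarith : (0:ℝ) ≤ M - 1) hlt
    rw [show M - 1 + 1 = M by ring] at h
    nlinarith
end
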